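/- Let Q be a stationary probability measure on Ω = {1,...,D}^ℤ and for each n let P assign to every string x_1^n over {1,...,D} a value P(x_1^n) > 0 with Σ_{x_1^n} P(x_1^n) ≤ 1. Suppose P is weakly universal for Q in the sense that lim_{n→∞} (1/n)·E_Q[−log P(X_1^n)] = h_Q. Then for infinitely many n, E_Q[I^P(X_1^n; X_{n+1}^{2n})] ≥ E_Q[I^Q(X_1^n; X_{n+1}^{2n})], where for a distribution R the pointwise mutual information is I^R(X;Y) = −log R(X) − log R(Y) + log R(X,Y). -/

import Mathlib

open Filter MeasureTheory
open scoped Topology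

/-- The prefix `x_1^n` of the one-sided sequence `x` (0-indexed: `x i = x_{i+1}`). -/
def pref {D : ℕ} (x : ℕ → Fin D) (n : ℕ) : List (Fin D) :=
  (List.range n).map x

/-- The two-sided sequence space `Ω = {1,...,D}^ℤ` with the product σ-algebra. -/
abbrev Omega (D : ℕ) := ℤ → Fin D

/-- The shift `T : Ω → Ω`. -/
def shiftT (D : ℕ) : Omega D → Omega D := fun ω i => ω (i + 1)

/-- The cylinder set `{X_1 = x 0, ..., X_n = x (n-1)}`. -/
def cylSet (D : ℕ) (x : ℕ → Fin D) (n : ℕ) : Set (Omega D) :=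
  {ω | ∀ i < n, ω ((i : ℤ) + 1) = x i}

/-- The one-sided sample path `X_1, X_2, ...` of `ω` (0-indexed). -/
def path (D : ℕ) (ω : Omega D) : ℕ → Fin D := fun i => ω ((i : ℤ) + 1)

/-- The cylinder probability `Q(x_1^n)`. -/
noncomputable def Qstr (D : ℕ) (Q : Measure (Omega D)) (x : ℕ → Fin D) (n : ℕ) : ℝ :=
  (Q (cylSet D x n)).toReal

/-- the first-n-coordinates map -/
def gmap (D n : ℕ) : Omega D → (Fin n → Fin D) := fun ω i => ω ((i : ℤ) + 1)

lemma gmap_measurable (D n : ℕ) : Measurable (gmap D n) :=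
  measurable_pi_iff.2 fun _ => measurable_pi_apply _

lemma pref_eq_ofFn {D : ℕ} (ω : Omega D) (n : ℕ) :
    pref (path D ω) n = List.ofFn (gmap D n ω) := by
  apply List.ext_getElem <;> simp [pref, gmap, path]

lemma cylSet_path {D : ℕ} (ω : Omega D) (n : ℕ) :
    cylSet D (path D ω) n = gmap D n ⁻¹' {gmap D n ω} := by
  ext ω'
  simp only [cylSet, Set.mem_setOf_eq, Set.mem_preimage, Set.mem_singleton_iff, funext_iff,
    gmap, path]
  constructor
  · intro h i; exact h i i.2
  · intro h i hi; exact h ⟨i, hi⟩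

lemma integral_comp_gmap {D n : ℕ} (Q : Measure (Omega D)) [IsProbabilityMeasure Q]
    (f : (Fin n → Fin D) → ℝ) :
    ∫ ω, f (gmap D n ω) ∂Q
      = ∑ v, ((Q.map (gmap D n)) {v}).toReal * f v := by
  have hg := gmap_measurable D n
  have : IsProbabilityMeasure (Q.map (gmap D n)) := Measure.isProbabilityMeasure_map hg.aemeasurable
  rw [← integral_map hg.aemeasurable (measurable_of_countable f).aestronglyMeasurable,
    integral_fintype .of_finite]
  simp [smul_eq_mul, Measure.real]

lemma Qstr_eq {D n : ℕ} (Q : Measure (Omega D)) (ω : Omega D) :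
    Qstr D Q (path D ω) n = ((Q.map (gmap D n)) {gmap D n ω}).toReal := by
  rw [Qstr, cylSet_path, Measure.map_apply (gmap_measurable D n) (measurableSet_singleton _)]

/-- Gibbs' inequality -/
lemma gibbs {ι : Type*} [Fintype ι] (q p : ι → ℝ) (hq0 : ∀ v, 0 ≤ q v)
    (hq1 : ∑ v, q v = 1) (hp : ∀ v, 0 < p v) (hp1 : ∑ v, p v ≤ 1) :
    0 ≤ ∑ v, q v * (Real.log (q v) - Real.log (p v)) := by
  have key : ∀ v, q v - p v ≤ q v * (Real.log (q v) - Real.log (p v)) := by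
    intro v
    rcases eq_or_lt_of_le (hq0 v) with h | h
    · simp [← h, (hp v).le]
    · have hlog : Real.log (p v / q v) ≤ p v / q v - 1 :=
        Real.log_le_sub_one_of_pos (div_pos (hp v) h)
      rw [Real.log_div (hp v).ne' h.ne'] at hlog
      have := mul_le_mul_of_nonneg_left hlog (hq0 v)
      calc q v - p v = -(q v * (p v / q v - 1)) := by field_simp; ring
        _ ≤ -(q v * (Real.log (p v) - Real.log (q v))) := by linarith
        _ = q v * (Real.log (q v) - Real.log (p v)) := by ring
  calc (0:ℝ) = 1 - 1 := by ring
    _ ≤ ∑ v, q v - ∑ v, p v := by rw [hq1]; linarith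
    _ = ∑ v, (q v - p v) := by rw [Finset.sum_sub_distrib]
    _ ≤ _ := Finset.sum_le_sum fun v _ => key v

lemma A_le_B {D : ℕ} (n : ℕ) (Q : Measure (Omega D)) [IsProbabilityMeasure Q]
    (P : List (Fin D) → ℝ) (hPpos : ∀ xs : List (Fin D), 0 < P xs)
    (hPsum : ∀ n : ℕ, ∑ v : Fin n → Fin D, P (List.ofFn v) ≤ 1) :
    ∫ ω, -Real.log (Qstr D Q (path D ω) n) ∂Q
      ≤ ∫ ω, -Real.log (P (pref (path D ω) n)) ∂Q := by
  set μ := Q.map (gmap D n) with hμ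
  set q : (Fin n → Fin D) → ℝ := fun v => (μ {v}).toReal with hqdef
  set p : (Fin n → Fin D) → ℝ := fun v => P (List.ofFn v) with hpdef
  have hA : ∫ ω, -Real.log (Qstr D Q (path D ω) n) ∂Q = ∑ v, q v * (-Real.log (q v)) := by
    simp_rw [Qstr_eq Q]
    exact integral_comp_gmap Q (fun v => -Real.log (((Q.map (gmap D n)) {v}).toReal))
  have hB : ∫ ω, -Real.log (P (pref (path D ω) n)) ∂Q = ∑ v, q v * (-Real.log (p v)) := by
    simp_rw [pref_eq_ofFn]
    exact integral_comp_gmap Q (fun v => -Real.log (P (List.ofFn v)))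
  have hq1 : ∑ v, q v = 1 := by
    have h1 : ∫ ω, (fun _ : Fin n → Fin D => (1:ℝ)) (gmap D n ω) ∂Q
        = ∑ v, q v * 1 := integral_comp_gmap Q (fun _ => (1:ℝ))
    simpa using h1.symm
  have h := gibbs q p (fun v => ENNReal.toReal_nonneg) hq1 (fun v => hPpos _) (hPsum n)
  rw [hA, hB]
  have e : ∑ v, q v * (Real.log (q v) - Real.log (p v))
      = ∑ v, q v * (-Real.log (p v)) - ∑ v, q v * (-Real.log (q v)) := by
    rw [← Finset.sum_sub_distrib]; congr 1 with v; ring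
  linarith [e ▸ h]

/-- Let `Q` be a stationary probability measure on `Ω = {1,...,D}^ℤ` and let `P` assign
to every string a positive value, summing to at most `1` over the strings of each
length `n`.  If `P` is weakly universal for `Q`, i.e.
`lim (1/n) E_Q[−log P(X_1^n)] = h_Q` where `h_Q = lim (1/n) E_Q[−log Q(X_1^n)]` is the
entropy rate, then `E_Q[I^P(X_1^n; X_{n+1}^{2n})] ≥ E_Q[I^Q(X_1^n; X_{n+1}^{2n})]`
holds for infinitely many `n`, where (using stationarity)
`E_Q[I^R(X_1^n; X_{n+1}^{2n})] = 2·E_Q[−log R(X_1^n)] − E_Q[−log R(X_1^{2n})]`. -/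
theorem universal_code_mutual_information_bound
    (D : ℕ) (hD : 0 < D)
    (Q : Measure (Omega D)) [IsProbabilityMeasure Q]
    (hstat : MeasurePreserving (shiftT D) Q Q)
    (P : List (Fin D) → ℝ)
    (hPpos : ∀ xs : List (Fin D), 0 < P xs)
    (hPsum : ∀ n : ℕ, ∑ v : Fin n → Fin D, P (List.ofFn v) ≤ 1)
    (hQ : ℝ)
    (hent : Tendsto
      (fun n : ℕ => (∫ ω, -Real.log (Qstr D Q (path D ω) n) ∂Q) / n) atTop (𝓝 hQ))
    (huniv : Tendsto
      (fun n : ℕ => (∫ ω, -Real.log (P (pref (path D ω) n)) ∂Q) / n) atTop (𝓝 hQ)) :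
    ∃ᶠ n in atTop,
      2 * (∫ ω, -Real.log (Qstr D Q (path D ω) n) ∂Q) -
          (∫ ω, -Real.log (Qstr D Q (path D ω) (2 * n)) ∂Q) ≤
        2 * (∫ ω, -Real.log (P (pref (path D ω) n)) ∂Q) -
          (∫ ω, -Real.log (P (pref (path D ω) (2 * n))) ∂Q) := by
  set A : ℕ → ℝ := fun n => ∫ ω, -Real.log (Qstr D Q (path D ω) n) ∂Q with hA
  set B : ℕ → ℝ := fun n => ∫ ω, -Real.log (P (pref (path D ω) n)) ∂Q with hB
  set c : ℕ → ℝ := fun n => B n - A n with hc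
  have hc0 : ∀ n, 0 ≤ c n := fun n => sub_nonneg.2 (A_le_B n Q P hPpos hPsum)
  have hczero : Tendsto (fun n : ℕ => c n / n) atTop (𝓝 0) := by
    have := huniv.sub hent
    simpa [hc, sub_div] using this
  by_contra hcon
  rw [Filter.not_frequently] at hcon
  rw [Filter.eventually_atTop] at hcon
  obtain ⟨N, hN⟩ := hcon
  have hstep : ∀ n ≥ N, 2 * c n < c (2 * n) := by
    intro n hn
    have := hN n hn
    push_neg at this
    simp only [hc]
    linarith
  set m := 2 * (N + 1) with hm
  have hmN : N + 1 ≥ N := Nat.le_succ N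
  have hcm : 0 < c m := lt_of_le_of_lt (by linarith [hc0 (N+1)]) (hstep (N+1) hmN)
  have key : ∀ k, (2:ℝ)^k * c m ≤ c (2^k * m) := by
    intro k
    induction k with
    | zero => simp
    | succ k ih =>
      have hge : 2^k * m ≥ N := by
        calc N ≤ m := by omega
          _ ≤ 2^k * m := Nat.le_mul_of_pos_left m (Nat.pow_pos (by norm_num))
      have h2 := hstep (2^k * m) hge
      have : (2:ℕ) * (2^k * m) = 2^(k+1) * m := by ring
      rw [this] at h2
      calc (2:ℝ)^(k+1) * c m = 2 * ((2:ℝ)^k * c m) := by ring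
        _ ≤ 2 * c (2^k * m) := by linarith
        _ ≤ c (2^(k+1) * m) := h2.le
  set ε := c m / m with hε
  have hε0 : 0 < ε := div_pos hcm (by positivity)
  have hbound : ∀ k, ε ≤ c (2^k * m) / (2^k * m : ℕ) := by
    intro k
    have hpos : (0:ℝ) < ((2^k * m : ℕ) : ℝ) := by positivity
    rw [hε, div_le_div_iff₀ (by positivity) hpos]
    have : ((2^k * m : ℕ) : ℝ) = (2:ℝ)^k * m := by push_cast; ring
    rw [this]
    calc c m * ((2:ℝ)^k * m) = ((2:ℝ)^k * c m) * m := by ring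
      _ ≤ c (2^k * m) * m := by
          have := key k
          have hm0 : (0:ℝ) ≤ (m:ℝ) := by positivity
          nlinarith
  have htend : Tendsto (fun k : ℕ => c (2^k * m) / ((2^k * m : ℕ) : ℝ)) atTop (𝓝 0) := by
    apply hczero.comp
    apply tendsto_atTop_mono (f := id) _ tendsto_id
    intro k
    calc k ≤ 2^k := (Nat.lt_two_pow_self).le
      _ ≤ 2^k * m := Nat.le_mul_of_pos_right _ (by omega)
  have := ge_of_tendsto' htend hbound
  linarith
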